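/- Weak convergence of the stationary measures to the Dirac measure as the noise vanishes (Theorem 4.2(i)): Let n ∈ ℕ, r > 0, and let P ∈ (Fin n → ℝ) be nonzero with Pᵢ ≥ 0 for all i. For σ ≠ 0 let p^σ denote the density of the Gamma distribution with shape α := 2r/σ² and rate α. Then for every bounded continuous function f : (Fin n → ℝ) → ℝ, ∫₀^∞ f(s•P)·p^σ(s) ds → f(P) as σ → 0. Equivalently, the pushforward μ^σ_P of the Gamma(α, α) distribution under s ↦ s•P converges weakly to the Dirac measure δ_P as σ → 0. -/

import Mathlib

open Real Filter Topology MeasureTheory ProbabilityTheory Set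

lemma gpdf_integrable {a r : ℝ} (ha : 0 < a) (hr : 0 < r) :
    Integrable (gammaPDFReal a r) := by
  refine ⟨(measurable_gammaPDFReal a r).aestronglyMeasurable, ?_⟩
  rw [hasFiniteIntegral_iff_norm]
  have h : ∀ x, ENNReal.ofReal ‖gammaPDFReal a r x‖ = gammaPDF a r x := fun x => by
    rw [Real.norm_eq_abs, abs_of_nonneg (gammaPDFReal_nonneg ha hr x)]; rfl
  simp_rw [h, lintegral_gammaPDF_eq_one ha hr]
  exact ENNReal.one_lt_top

lemma gpdf_integral_eq_one {a r : ℝ} (ha : 0 < a) (hr : 0 < r) :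
    ∫ s in Ioi (0:ℝ), gammaPDFReal a r s = 1 := by
  have h1 : ∫ s, gammaPDFReal a r s = 1 := by
    rw [integral_eq_lintegral_of_nonneg_ae (ae_of_all _ (gammaPDFReal_nonneg ha hr))
      (measurable_gammaPDFReal a r).aestronglyMeasurable]
    have h : ∀ x, ENNReal.ofReal (gammaPDFReal a r x) = gammaPDF a r x := fun _ => rfl
    simp_rw [h, lintegral_gammaPDF_eq_one ha hr, ENNReal.toReal_one]
  have h2 : ∫ s in Iio (0:ℝ), gammaPDFReal a r s = 0 := by
    rw [setIntegral_congr_fun measurableSet_Iio (g := fun _ => (0:ℝ))]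
    · simp
    · intro x hx
      simp only [gammaPDFReal, if_neg (not_le.mpr (mem_Iio.mp hx))]
  have h3 := intervalIntegral.integral_Iio_add_Ici (b:=(0:ℝ))
    (gpdf_integrable ha hr).integrableOn (gpdf_integrable ha hr).integrableOn
  rw [← integral_Ici_eq_integral_Ioi]
  rw [h2, zero_add, h1] at h3
  exact h3

lemma gpdf_mul_self {a r s : ℝ} (ha : 0 < a) (hr : 0 < r) (hs : 0 < s) :
    s * gammaPDFReal a r s = (a / r) * gammaPDFReal (a + 1) r s := by
  have hΓ : Real.Gamma a ≠ 0 := (Real.Gamma_pos_of_pos ha).ne'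
  simp only [gammaPDFReal, if_pos hs.le]
  rw [Real.Gamma_add_one ha.ne', show a + 1 - 1 = a from by ring,
    Real.rpow_add_one hr.ne' a]
  have hs1 : s ^ (a : ℝ) = s ^ (a - 1) * s := by
    rw [← Real.rpow_add_one hs.ne']; ring_nf
  rw [hs1]
  field_simp

lemma gpdf_mul_integrable {a r : ℝ} (ha : 0 < a) (hr : 0 < r) :
    IntegrableOn (fun s => s * gammaPDFReal a r s) (Set.Ioi (0:ℝ)) := by
  refine (((gpdf_integrable (by linarith : (0:ℝ) < a + 1) hr).integrableOn).const_mul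
    (a / r)).congr ?_
  rw [EventuallyEq, ae_restrict_iff' measurableSet_Ioi]
  exact ae_of_all _ fun s hs => (gpdf_mul_self ha hr hs).symm

lemma gpdf_first_moment {a r : ℝ} (ha : 0 < a) (hr : 0 < r) :
    ∫ s in Ioi (0:ℝ), s * gammaPDFReal a r s = a / r := by
  rw [setIntegral_congr_fun measurableSet_Ioi
    (g := fun s => (a / r) * gammaPDFReal (a + 1) r s)
    (fun s hs => gpdf_mul_self ha hr hs), integral_const_mul,
    gpdf_integral_eq_one (by linarith) hr, mul_one]

lemma gpdf_sq_mul_self {a r s : ℝ} (ha : 0 < a) (hr : 0 < r) (hs : 0 < s) :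
    s ^ 2 * gammaPDFReal a r s = (a / r) * ((a + 1) / r) * gammaPDFReal (a + 2) r s := by
  have h1 : s ^ 2 * gammaPDFReal a r s = s * (s * gammaPDFReal a r s) := by ring
  rw [h1, gpdf_mul_self ha hr hs,
    show s * (a / r * gammaPDFReal (a + 1) r s) = (a / r) * (s * gammaPDFReal (a + 1) r s)
      from by ring,
    gpdf_mul_self (by linarith : (0:ℝ) < a + 1) hr hs, show a + 1 + 1 = a + 2 from by ring]
  ring

lemma gpdf_sq_integrable {a r : ℝ} (ha : 0 < a) (hr : 0 < r) :
    IntegrableOn (fun s => s ^ 2 * gammaPDFReal a r s) (Set.Ioi (0:ℝ)) := by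
  refine (((gpdf_integrable (by linarith : (0:ℝ) < a + 2) hr).integrableOn).const_mul
    ((a / r) * ((a + 1) / r))).congr ?_
  rw [EventuallyEq, ae_restrict_iff' measurableSet_Ioi]
  exact ae_of_all _ fun s hs => (gpdf_sq_mul_self ha hr hs).symm

lemma gpdf_second_moment {a r : ℝ} (ha : 0 < a) (hr : 0 < r) :
    ∫ s in Ioi (0:ℝ), s ^ 2 * gammaPDFReal a r s = (a / r) * ((a + 1) / r) := by
  rw [setIntegral_congr_fun measurableSet_Ioi
    (g := fun s => (a / r) * ((a + 1) / r) * gammaPDFReal (a + 2) r s)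
    (fun s hs => gpdf_sq_mul_self ha hr hs), integral_const_mul,
    gpdf_integral_eq_one (by linarith) hr, mul_one]

lemma gpdf_var_integrable {a : ℝ} (ha : 0 < a) :
    IntegrableOn (fun s => (s - 1) ^ 2 * gammaPDFReal a a s) (Set.Ioi (0:ℝ)) := by
  have h : ∀ s : ℝ, (s - 1) ^ 2 * gammaPDFReal a a s =
      s ^ 2 * gammaPDFReal a a s - 2 * (s * gammaPDFReal a a s) + gammaPDFReal a a s := by
    intro s; ring
  simp_rw [h]
  exact ((gpdf_sq_integrable ha ha).sub ((gpdf_mul_integrable ha ha).const_mul 2)).add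
    (gpdf_integrable ha ha).integrableOn

lemma gpdf_variance {a : ℝ} (ha : 0 < a) :
    ∫ s in Ioi (0:ℝ), (s - 1) ^ 2 * gammaPDFReal a a s = 1 / a := by
  have h : ∀ s : ℝ, (s - 1) ^ 2 * gammaPDFReal a a s =
      s ^ 2 * gammaPDFReal a a s - 2 * (s * gammaPDFReal a a s) + gammaPDFReal a a s := by
    intro s; ring
  simp_rw [h]
  have hi1 : IntegrableOn (fun s : ℝ => s ^ 2 * gammaPDFReal a a s - 2 * (s * gammaPDFReal a a s))
      (Set.Ioi (0:ℝ)) := (gpdf_sq_integrable ha ha).sub ((gpdf_mul_integrable ha ha).const_mul 2)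
  rw [integral_add hi1 (gpdf_integrable ha ha).integrableOn]
  rw [integral_sub (gpdf_sq_integrable ha ha) ((gpdf_mul_integrable ha ha).const_mul 2)]
  rw [integral_const_mul, gpdf_second_moment ha ha, gpdf_first_moment ha ha,
    gpdf_integral_eq_one ha ha]
  field_simp
  ring

lemma cheb_set_measurable (δ : ℝ) : MeasurableSet {s : ℝ | δ ≤ |s - 1|} :=
  measurableSet_le measurable_const
    ((continuous_abs.comp (continuous_id.sub continuous_const)).measurable)

lemma gpdf_chebyshev {a δ : ℝ} (ha : 0 < a) (hδ : 0 < δ) :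
    ∫ s in Ioi (0:ℝ) ∩ {s | δ ≤ |s - 1|}, gammaPDFReal a a s ≤ 1 / a / δ ^ 2 := by
  set B := Ioi (0:ℝ) ∩ {s | δ ≤ |s - 1|} with hB
  have hBm : MeasurableSet B := measurableSet_Ioi.inter (cheb_set_measurable δ)
  have hBs : B ⊆ Ioi (0:ℝ) := Set.inter_subset_left
  have hvar : IntegrableOn (fun s => (s - 1) ^ 2 / δ ^ 2 * gammaPDFReal a a s) B := by
    have := ((gpdf_var_integrable ha).mono_set hBs).const_mul (1 / δ ^ 2)
    refine this.congr (ae_of_all _ fun s => ?_)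
    ring
  have h1 : ∫ s in B, gammaPDFReal a a s
      ≤ ∫ s in B, (s - 1) ^ 2 / δ ^ 2 * gammaPDFReal a a s := by
    refine setIntegral_mono_on ((gpdf_integrable ha ha).integrableOn.mono_set hBs) hvar hBm ?_
    intro s hs
    have hd : δ ≤ |s - 1| := hs.2
    have h2 : δ ^ 2 ≤ (s - 1) ^ 2 := by
      calc δ ^ 2 ≤ |s - 1| ^ 2 := by
            apply pow_le_pow_left₀ hδ.le hd 2
        _ = (s - 1) ^ 2 := sq_abs _
    have h3 : (1:ℝ) ≤ (s - 1) ^ 2 / δ ^ 2 := (one_le_div (by positivity)).mpr h2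
    nlinarith [gammaPDFReal_nonneg ha ha s, mul_le_mul_of_nonneg_right h3
      (gammaPDFReal_nonneg ha ha s)]
  have h2 : ∫ s in B, (s - 1) ^ 2 / δ ^ 2 * gammaPDFReal a a s
      = (1 / δ ^ 2) * ∫ s in B, (s - 1) ^ 2 * gammaPDFReal a a s := by
    rw [← integral_const_mul]
    refine setIntegral_congr_fun hBm fun s _ => ?_
    ring
  have h3 : ∫ s in B, (s - 1) ^ 2 * gammaPDFReal a a s
      ≤ ∫ s in Ioi (0:ℝ), (s - 1) ^ 2 * gammaPDFReal a a s := by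
    refine setIntegral_mono_set (gpdf_var_integrable ha) (ae_of_all _ fun s => ?_)
      (HasSubset.Subset.eventuallyLE hBs)
    exact mul_nonneg (sq_nonneg _) (gammaPDFReal_nonneg ha ha s)
  rw [gpdf_variance ha] at h3
  calc ∫ s in B, gammaPDFReal a a s
      ≤ (1 / δ ^ 2) * ∫ s in B, (s - 1) ^ 2 * gammaPDFReal a a s := by rw [← h2]; exact h1
    _ ≤ (1 / δ ^ 2) * (1 / a) := by
        apply mul_le_mul_of_nonneg_left h3 (by positivity)
    _ = 1 / a / δ ^ 2 := by ring

lemma gamma_tendsto_atTop (g : ℝ → ℝ) (hg : Continuous g) (M : ℝ) (hM : ∀ x, |g x| ≤ M) :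
    Tendsto (fun a : ℝ => ∫ s in Ioi (0:ℝ), g s * gammaPDFReal a a s) atTop (𝓝 (g 1)) := by
  have hM0 : 0 ≤ M := le_trans (abs_nonneg _) (hM 0)
  rw [Metric.tendsto_atTop]
  intro ε hε
  -- continuity of g at 1
  obtain ⟨δ, hδ, hδc⟩ := Metric.continuousAt_iff.mp (hg.continuousAt (x := 1)) (ε / 4) (by linarith)
  refine ⟨max 1 (8 * M / (δ ^ 2 * ε)), fun a haN => ?_⟩
  have ha1 : (1:ℝ) ≤ a := le_trans (le_max_left _ _) haN
  have ha : 0 < a := lt_of_lt_of_le one_pos ha1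
  have haM : 8 * M / (δ ^ 2 * ε) ≤ a := le_trans (le_max_right _ _) haN
  have htail : 2 * M * (1 / a / δ ^ 2) ≤ ε / 4 := by
    rw [div_le_iff₀ (by positivity)] at haM
    have h : (0:ℝ) < a * δ ^ 2 := by positivity
    rw [div_div, mul_one_div, div_le_iff₀ h]
    nlinarith
  set A : Set ℝ := Ioi (0:ℝ) ∩ {s | |s - 1| < δ} with hA
  set B : Set ℝ := Ioi (0:ℝ) ∩ {s | δ ≤ |s - 1|} with hB
  have hAm : MeasurableSet A := measurableSet_Ioi.inter
    (measurableSet_lt ((continuous_abs.comp (continuous_id.sub continuous_const)).measurable)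
      measurable_const)
  have hBm : MeasurableSet B := measurableSet_Ioi.inter (cheb_set_measurable δ)
  have hdisj : Disjoint A B := by
    rw [Set.disjoint_left]
    rintro s ⟨-, h1⟩ ⟨-, h2⟩
    simp only [Set.mem_setOf_eq] at h1 h2
    exact absurd h2 (not_le.mpr h1)
  have hunion : A ∪ B = Ioi (0:ℝ) := by
    rw [hA, hB, ← Set.inter_union_distrib_left]
    have : {s : ℝ | |s - 1| < δ} ∪ {s | δ ≤ |s - 1|} = Set.univ := by
      ext s; simp [lt_or_ge]
    rw [this, Set.inter_univ]
  -- integrability of |g s - g 1| * pdf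
  have hbdd : ∀ s : ℝ, ‖|g s - g 1|‖ ≤ 2 * M := by
    intro s
    rw [norm_abs_eq_norm, Real.norm_eq_abs]
    calc |g s - g 1| ≤ |g s| + |g 1| := abs_sub _ _
      _ ≤ M + M := add_le_add (hM s) (hM 1)
      _ = 2 * M := by ring
  have hmeas : AEStronglyMeasurable (fun s => |g s - g 1|)
      (volume.restrict (Ioi (0:ℝ))) :=
    ((hg.sub continuous_const).abs).aestronglyMeasurable.restrict
  have hint : IntegrableOn (fun s => |g s - g 1| * gammaPDFReal a a s) (Ioi (0:ℝ)) :=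
    Integrable.bdd_mul (gpdf_integrable ha ha).integrableOn hmeas (ae_of_all _ hbdd)
  have hintg : IntegrableOn (fun s => g s * gammaPDFReal a a s) (Ioi (0:ℝ)) :=
    Integrable.bdd_mul (gpdf_integrable ha ha).integrableOn
      (hg.aestronglyMeasurable.restrict) (ae_of_all _ fun s => by rw [Real.norm_eq_abs]; exact hM s)
  -- rewrite the distance
  have key : (∫ s in Ioi (0:ℝ), g s * gammaPDFReal a a s) - g 1
      = ∫ s in Ioi (0:ℝ), (g s - g 1) * gammaPDFReal a a s := by
    have h1 : ∀ s : ℝ, (g s - g 1) * gammaPDFReal a a s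
        = g s * gammaPDFReal a a s - g 1 * gammaPDFReal a a s := fun s => by ring
    simp_rw [h1]
    rw [integral_sub hintg (((gpdf_integrable ha ha).integrableOn).const_mul (g 1)),
      integral_const_mul, gpdf_integral_eq_one ha ha, mul_one]
  rw [Real.dist_eq, key]
  have habs : |∫ s in Ioi (0:ℝ), (g s - g 1) * gammaPDFReal a a s|
      ≤ ∫ s in Ioi (0:ℝ), |g s - g 1| * gammaPDFReal a a s := by
    calc |∫ s in Ioi (0:ℝ), (g s - g 1) * gammaPDFReal a a s|
        ≤ ∫ s in Ioi (0:ℝ), |(g s - g 1) * gammaPDFReal a a s| := (by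
          simpa only [Real.norm_eq_abs] using
            norm_integral_le_integral_norm (μ := volume.restrict (Ioi (0:ℝ)))
              (fun s => (g s - g 1) * gammaPDFReal a a s))
      _ = ∫ s in Ioi (0:ℝ), |g s - g 1| * gammaPDFReal a a s := by
          refine setIntegral_congr_fun measurableSet_Ioi fun s _ => ?_
          rw [abs_mul, abs_of_nonneg (gammaPDFReal_nonneg ha ha s)]
  have hsplit : ∫ s in Ioi (0:ℝ), |g s - g 1| * gammaPDFReal a a s
      = (∫ s in A, |g s - g 1| * gammaPDFReal a a s)
        + ∫ s in B, |g s - g 1| * gammaPDFReal a a s := by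
    rw [← setIntegral_union hdisj hBm (hint.mono_set (hunion ▸ Set.subset_union_left))
      (hint.mono_set (hunion ▸ Set.subset_union_right)), hunion]
  have hApart : ∫ s in A, |g s - g 1| * gammaPDFReal a a s ≤ ε / 4 := by
    have h1 : ∫ s in A, |g s - g 1| * gammaPDFReal a a s
        ≤ ∫ s in A, (ε / 4) * gammaPDFReal a a s := by
      refine setIntegral_mono_on (hint.mono_set (hunion ▸ Set.subset_union_left))
        (((gpdf_integrable ha ha).integrableOn.mono_set
          (hunion ▸ Set.subset_union_left)).const_mul _) hAm fun s hs => ?_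
      have : dist s 1 < δ := by rw [Real.dist_eq]; exact hs.2
      exact mul_le_mul_of_nonneg_right (le_of_lt (by simpa [Real.dist_eq] using hδc this))
        (gammaPDFReal_nonneg ha ha s)
    have h2 : ∫ s in A, (ε / 4) * gammaPDFReal a a s ≤ ε / 4 := by
      rw [integral_const_mul]
      have h3 : ∫ s in A, gammaPDFReal a a s ≤ 1 := by
        rw [← gpdf_integral_eq_one ha ha]
        refine setIntegral_mono_set (gpdf_integrable ha ha).integrableOn
          (ae_of_all _ (gammaPDFReal_nonneg ha ha))
          (HasSubset.Subset.eventuallyLE (hunion ▸ Set.subset_union_left))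
      nlinarith
    linarith
  have hBpart : ∫ s in B, |g s - g 1| * gammaPDFReal a a s ≤ ε / 4 := by
    have h1 : ∫ s in B, |g s - g 1| * gammaPDFReal a a s
        ≤ ∫ s in B, (2 * M) * gammaPDFReal a a s := by
      refine setIntegral_mono_on (hint.mono_set (hunion ▸ Set.subset_union_right))
        (((gpdf_integrable ha ha).integrableOn.mono_set
          (hunion ▸ Set.subset_union_right)).const_mul _) hBm fun s _ => ?_
      exact mul_le_mul_of_nonneg_right (by simpa using hbdd s)
        (gammaPDFReal_nonneg ha ha s)
    have h2 : ∫ s in B, (2 * M) * gammaPDFReal a a s ≤ 2 * M * (1 / a / δ ^ 2) := by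
      rw [integral_const_mul]
      exact mul_le_mul_of_nonneg_left (gpdf_chebyshev ha hδ) (by positivity)
    linarith
  calc |∫ s in Ioi (0:ℝ), (g s - g 1) * gammaPDFReal a a s|
      ≤ ∫ s in Ioi (0:ℝ), |g s - g 1| * gammaPDFReal a a s := habs
    _ ≤ ε / 4 + ε / 4 := by rw [hsplit]; exact add_le_add hApart hBpart
    _ < ε := by linarith


/-- **Weak convergence of the stationary measures to the Dirac measure as the noise
vanishes** (Theorem 4.2(i)). With `p^σ` the Gamma(α, α) density, `α = 2r/σ²`, for
every bounded continuous `f` one has `∫₀^∞ f(s • P) p^σ(s) ds → f(P)` as `σ → 0`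
(through nonzero values); i.e. `μ^σ_P → δ_P` weakly. -/
theorem stationary_measure_weak_convergence_to_dirac
    (n : ℕ) (r : ℝ) (hr : 0 < r)
    (P : Fin n → ℝ) (hP : P ≠ 0) (hPnn : ∀ i, 0 ≤ P i)
    (f : (Fin n → ℝ) → ℝ) (hf_cont : Continuous f)
    (hf_bdd : ∃ M : ℝ, ∀ x, |f x| ≤ M) :
    Tendsto (fun σ : ℝ =>
        ∫ s in Set.Ioi (0:ℝ),
          f (s • P) *
            ((2 * r / σ ^ 2) ^ (2 * r / σ ^ 2) / Real.Gamma (2 * r / σ ^ 2) *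
              s ^ (2 * r / σ ^ 2 - 1) * Real.exp (-(2 * r / σ ^ 2 * s))))
      (𝓝[≠] 0) (𝓝 (f P)) := by
  obtain ⟨M, hM⟩ := hf_bdd
  set g : ℝ → ℝ := fun s => f (s • P) with hgdef
  have hgc : Continuous g := hf_cont.comp (continuous_id.smul continuous_const)
  have hg1 : g 1 = f P := by simp [hgdef]
  have hα : Tendsto (fun σ : ℝ => 2 * r / σ ^ 2) (𝓝[≠] (0:ℝ)) atTop := by
    have h1 : Tendsto (fun σ : ℝ => σ ^ 2) (𝓝[≠] (0:ℝ)) (𝓝[>] (0:ℝ)) := by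
      rw [tendsto_nhdsWithin_iff]
      constructor
      · have h := (continuous_pow 2).tendsto (0:ℝ)
        simpa using h.mono_left nhdsWithin_le_nhds
      · filter_upwards [self_mem_nhdsWithin] with σ hσ
        exact Set.mem_Ioi.mpr (pow_two_pos_of_ne_zero hσ)
    have h2 : Tendsto (fun x : ℝ => 2 * r / x) (𝓝[>] (0:ℝ)) atTop := by
      simp_rw [div_eq_mul_inv]
      exact tendsto_inv_nhdsGT_zero.const_mul_atTop (by linarith)
    exact h2.comp h1
  have hmain := (gamma_tendsto_atTop g hgc M (fun x => hM _)).comp hα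
  rw [hg1] at hmain
  refine hmain.congr fun σ => ?_
  refine setIntegral_congr_fun measurableSet_Ioi fun s hs => ?_
  simp only [Function.comp, hgdef, gammaPDFReal, if_pos (le_of_lt (Set.mem_Ioi.mp hs))]
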